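/- Let X be a real Banach space with dim X ≥ 2, let F : X → ℝ be convex, x ∈ X and let x* ∈ X* be a subgradient of F at x. Then for every λ ≥ 1 and τ ≥ 0: ρ_{F,x}^{x*}(λτ) ≥ λ·ρ_{F,x}^{x*}(τ) and δ_{F,x}^{x*}(λτ) ≥ λ·δ_{F,x}^{x*}(τ). In particular ρ_{F,x}^{x*} and δ_{F,x}^{x*} are nondecreasing on [0,∞). -/

import Mathlib

open scoped ENNReal

/-- The modulus of smoothness of a normed space `Y`:
`ρ_Y(τ) = sup {(‖x+τy‖+‖x−τy‖)/2 − 1 : x, y ∈ S_Y}`. -/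
noncomputable def rhoSpace (Y : Type*) [NormedAddCommGroup Y] [NormedSpace ℝ Y] (τ : ℝ) : ℝ :=
  sSup {r : ℝ | ∃ x y : Y, ‖x‖ = 1 ∧ ‖y‖ = 1 ∧ r = (‖x + τ • y‖ + ‖x - τ • y‖) / 2 - 1}

/-- The modulus of convexity of a normed space `Y`:
`δ_Y(ε) = inf {1 − ‖y+ỹ‖/2 : y, ỹ ∈ S_Y, ‖y−ỹ‖ = ε}`. -/
noncomputable def deltaSpace (Y : Type*) [NormedAddCommGroup Y] [NormedSpace ℝ Y] (ε : ℝ) : ℝ :=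
  sInf {r : ℝ | ∃ y z : Y, ‖y‖ = 1 ∧ ‖z‖ = 1 ∧ ‖y - z‖ = ε ∧ r = 1 - ‖y + z‖ / 2}

/-- `φ` is a subgradient of `F` at `x`: `F(y) ≥ F(x) + ⟨φ, y−x⟩` for all `y`. -/
def IsSubgradient {X : Type*} [NormedAddCommGroup X] [NormedSpace ℝ X]
    (F : X → ℝ) (x : X) (φ : X →L[ℝ] ℝ) : Prop :=
  ∀ y : X, F x + φ (y - x) ≤ F y

/-- The linearization error (Bregman divergence)
`Δ_F^{φ}(y,x) = F(y) − F(x) − ⟨φ, y−x⟩`. -/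
def breg {X : Type*} [NormedAddCommGroup X] [NormedSpace ℝ X]
    (F : X → ℝ) (φ : X →L[ℝ] ℝ) (y x : X) : ℝ :=
  F y - F x - φ (y - x)

/-- The modulus of smoothness of `F` at `x` w.r.t. `φ`, with values in `[0,∞]`:
`ρ_{F,x}^{φ}(τ) = sup {|Δ_F^{φ}(y,x)| : ‖y−x‖ = τ}`. -/
noncomputable def rhoF {X : Type*} [NormedAddCommGroup X] [NormedSpace ℝ X]
    (F : X → ℝ) (x : X) (φ : X →L[ℝ] ℝ) (τ : ℝ) : ℝ≥0∞ :=
  ⨆ y ∈ {y : X | ‖y - x‖ = τ}, ENNReal.ofReal |breg F φ y x|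

/-- The modulus of convexity of `F` at `x` w.r.t. `φ`, with values in `[0,∞]`:
`δ_{F,x}^{φ}(τ) = inf {|Δ_F^{φ}(y,x)| : ‖y−x‖ = τ}`. -/
noncomputable def deltaF {X : Type*} [NormedAddCommGroup X] [NormedSpace ℝ X]
    (F : X → ℝ) (x : X) (φ : X →L[ℝ] ℝ) (τ : ℝ) : ℝ≥0∞ :=
  ⨅ y ∈ {y : X | ‖y - x‖ = τ}, ENNReal.ofReal |breg F φ y x|

/-- `jp` is a selection of the duality mapping with exponent `p`:
`⟨j_p(x), x⟩ = ‖j_p(x)‖·‖x‖` and `‖j_p(x)‖ = ‖x‖^{p−1}` for every `x`. -/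
def IsDualitySelection {X : Type*} [NormedAddCommGroup X] [NormedSpace ℝ X]
    (p : ℝ) (jp : X → X →L[ℝ] ℝ) : Prop :=
  ∀ x : X, jp x x = ‖jp x‖ * ‖x‖ ∧ ‖jp x‖ = ‖x‖ ^ (p - 1)

/-- for convex `F` and `x* ∈ ∂F(x)`, for all `λ ≥ 1`, `τ ≥ 0`:
`ρ_{F,x}^{x*}(λτ) ≥ λ·ρ_{F,x}^{x*}(τ)` and `δ_{F,x}^{x*}(λτ) ≥ λ·δ_{F,x}^{x*}(τ)`;
in particular both moduli are nondecreasing on `[0,∞)`. -/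
theorem stmt6 (X : Type*) [NormedAddCommGroup X] [NormedSpace ℝ X] [CompleteSpace X]
    (hdim : 2 ≤ Module.rank ℝ X)
    (F : X → ℝ) (hF : ConvexOn ℝ Set.univ F)
    (x : X) (xs : X →L[ℝ] ℝ) (hxs : IsSubgradient F x xs) :
    (∀ l τ : ℝ, 1 ≤ l → 0 ≤ τ →
      ENNReal.ofReal l * rhoF F x xs τ ≤ rhoF F x xs (l * τ) ∧
      ENNReal.ofReal l * deltaF F x xs τ ≤ deltaF F x xs (l * τ)) ∧
    (∀ τ₁ τ₂ : ℝ, 0 ≤ τ₁ → τ₁ ≤ τ₂ →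
      rhoF F x xs τ₁ ≤ rhoF F x xs τ₂ ∧ deltaF F x xs τ₁ ≤ deltaF F x xs τ₂) := by
  have hbreg : ∀ y, 0 ≤ breg F xs y x := by
    intro y
    have := hxs y
    simp only [breg]
    linarith
  have habs : ∀ y, |breg F xs y x| = breg F xs y x := fun y => abs_of_nonneg (hbreg y)
  -- key convexity inequality
  have hkey : ∀ (l : ℝ) (v : X), 1 ≤ l →
      l * breg F xs (x + v) x ≤ breg F xs (x + l • v) x := by
    intro l v hl
    have hl0 : (0:ℝ) < l := lt_of_lt_of_le one_pos hl
    set t : ℝ := 1 / l with ht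
    have ht0 : 0 ≤ t := by positivity
    have ht1 : t ≤ 1 := by
      rw [ht]; rw [div_le_one hl0]; linarith
    have hst : (1 - t) + t = 1 := by ring
    have hconv := hF.2 (Set.mem_univ x) (Set.mem_univ (x + l • v))
      (by linarith : (0:ℝ) ≤ 1 - t) ht0 hst
    have hpt : (1 - t) • x + t • (x + l • v) = x + v := by
      have htl : t * l = 1 := by rw [ht, one_div, inv_mul_cancel₀ hl0.ne']
      rw [smul_add, smul_smul, htl, one_smul]
      module
    rw [hpt] at hconv
    simp only [breg, add_sub_cancel_left, map_smul, smul_eq_mul]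
    have : F (x + v) ≤ (1 - t) * F x + t * F (x + l • v) := hconv
    have htl : t * l = 1 := by rw [ht, one_div, inv_mul_cancel₀ hl0.ne']
    have h3 := mul_le_mul_of_nonneg_left this hl0.le
    have e1 : l * ((1 - t) * F x + t * F (x + l • v))
        = (l - 1) * F x + F (x + l • v) := by
      have : l * t = 1 := by linarith [htl]
      linear_combination (F (x + l • v) - F x) * this
    rw [e1] at h3
    linarith
  have hmain : ∀ l τ : ℝ, 1 ≤ l → 0 ≤ τ →
      ENNReal.ofReal l * rhoF F x xs τ ≤ rhoF F x xs (l * τ) ∧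
      ENNReal.ofReal l * deltaF F x xs τ ≤ deltaF F x xs (l * τ) := by
    intro l τ hl hτ
    have hl0 : (0:ℝ) < l := lt_of_lt_of_le one_pos hl
    constructor
    · rw [rhoF, ENNReal.mul_iSup]
      simp_rw [ENNReal.mul_iSup]
      apply iSup₂_le
      intro y hy
      simp only [Set.mem_setOf_eq] at hy
      have hz : ‖(x + l • (y - x)) - x‖ = l * τ := by
        rw [add_sub_cancel_left, norm_smul, Real.norm_eq_abs, abs_of_pos hl0, hy]
      calc ENNReal.ofReal l * ENNReal.ofReal |breg F xs y x|
          = ENNReal.ofReal (l * breg F xs y x) := by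
            rw [habs, ENNReal.ofReal_mul hl0.le]
        _ ≤ ENNReal.ofReal (breg F xs (x + l • (y - x)) x) := by
            apply ENNReal.ofReal_le_ofReal
            have := hkey l (y - x) hl
            rwa [add_sub_cancel] at this
        _ ≤ rhoF F x xs (l * τ) := by
            rw [rhoF]
            have := le_iSup₂ (f := fun z (_ : z ∈ {y : X | ‖y - x‖ = l * τ}) =>
              ENNReal.ofReal |breg F xs z x|) (x + l • (y - x)) hz
            rwa [habs] at this
    · rw [deltaF]
      apply le_iInf₂
      intro z hz
      simp only [Set.mem_setOf_eq] at hz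
      have hy : ‖(x + l⁻¹ • (z - x)) - x‖ = τ := by
        rw [add_sub_cancel_left, norm_smul, Real.norm_eq_abs, abs_of_pos (by positivity), hz]
        field_simp
      calc ENNReal.ofReal l * deltaF F x xs τ
          ≤ ENNReal.ofReal l * ENNReal.ofReal |breg F xs (x + l⁻¹ • (z - x)) x| := by
            apply mul_le_mul_right
            exact iInf₂_le (f := fun y (_ : y ∈ {y : X | ‖y - x‖ = τ}) =>
              ENNReal.ofReal |breg F xs y x|) _ hy
        _ ≤ ENNReal.ofReal |breg F xs z x| := by
            rw [habs, habs, ← ENNReal.ofReal_mul hl0.le]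
            apply ENNReal.ofReal_le_ofReal
            have := hkey l (l⁻¹ • (z - x)) hl
            rw [smul_smul, mul_inv_cancel₀ hl0.ne', one_smul] at this
            have hzz : x + (z - x) = z := by abel
            rwa [hzz] at this
  refine ⟨hmain, ?_⟩
  intro τ₁ τ₂ hτ₁ hle
  rcases eq_or_lt_of_le hτ₁ with h0 | h0
  · -- τ₁ = 0
    have hr0 : rhoF F x xs τ₁ = 0 := by
      rw [rhoF, ← h0]
      apply le_antisymm _ (zero_le)
      apply iSup₂_le
      intro y hy
      simp only [Set.mem_setOf_eq, norm_eq_zero, sub_eq_zero] at hy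
      subst hy
      simp [breg]
    have hd0 : deltaF F x xs τ₁ = 0 := by
      rw [deltaF, ← h0]
      apply le_antisymm _ (zero_le)
      have hx : x ∈ {y : X | ‖y - x‖ = (0:ℝ)} := by simp
      refine le_trans (iInf₂_le x hx) ?_
      simp [breg]
    rw [hr0, hd0]
    exact ⟨zero_le, zero_le⟩
  · set l : ℝ := τ₂ / τ₁ with hldef
    have hl : 1 ≤ l := (one_le_div h0).mpr hle
    have hlt : l * τ₁ = τ₂ := div_mul_cancel₀ τ₂ h0.ne'
    have hone : (1:ℝ≥0∞) ≤ ENNReal.ofReal l := by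
      rw [ENNReal.one_le_ofReal]; exact hl
    obtain ⟨h1, h2⟩ := hmain l τ₁ hl h0.le
    rw [hlt] at h1 h2
    constructor
    · exact le_trans (le_mul_of_one_le_left (zero_le) hone) h1
    · exact le_trans (le_mul_of_one_le_left (zero_le) hone) h2
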